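/- Let ν be a measure and let E₀ ⊃ E₁ ⊃ E₂ ⊃ ⋯ be a decreasing sequence of measurable sets with E = ⋂_k E_k and ν(E₀) < ∞. Let ω : E₀ → [0, ∞) be measurable with ω = 0 on E, let c_k ≥ 0, and suppose that for every j, ∑_{k=0}^{j} c_k · sup_{x ∈ E_j} ω(x) ≤ C < ∞. Then ∑_{k=0}^{∞} c_k ∫_{E_k} ω dν ≤ C · ν(E₀ \ E). -/

import Mathlib

open MeasureTheory Set ENNReal

/-- Weighted sums over a decreasing sequence of sets: if `ω` vanishes on `E = ⋂ E_k` and the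
partial sums `∑_{k ≤ j} c_k · sup_{E_j} ω` are uniformly bounded by `C`, then
`∑_k c_k ∫_{E_k} ω dν ≤ C · ν(E₀ \ E)`. -/
theorem statement2 {X : Type*} [MeasurableSpace X] (ν : Measure X)
    (E : ℕ → Set X) (hmeas : ∀ k, MeasurableSet (E k)) (hanti : ∀ k, E (k + 1) ⊆ E k)
    (hfin : ν (E 0) < ⊤)
    (ω : X → ℝ≥0∞) (hω : Measurable ω) (hω0 : ∀ x ∈ ⋂ k, E k, ω x = 0)
    (c : ℕ → ℝ≥0∞) (C : ℝ≥0∞) (hC : C ≠ ⊤)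
    (hbound : ∀ j, (∑ k ∈ Finset.range (j + 1), c k) * (⨆ x ∈ E j, ω x) ≤ C) :
    ∑' k, c k * ∫⁻ x in E k, ω x ∂ν ≤ C * ν (E 0 \ ⋂ k, E k) := by
  classical
  set Eint : Set X := ⋂ k, E k with hEintdef
  have hEintmeas : MeasurableSet Eint := MeasurableSet.iInter hmeas
  have hAnti : Antitone E := antitone_nat_of_succ_le hanti
  set A : ℕ → Set X := fun j => E j \ E (j + 1) with hAdef
  have hAmeas : ∀ j, MeasurableSet (A j) := fun j => (hmeas j).diff (hmeas (j + 1))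
  have hdisj : Pairwise (Function.onFun Disjoint A) := by
    intro i j hij
    wlog h : i < j generalizing i j
    · exact (this hij.symm (hij.lt_or_gt.resolve_left h)).symm
    · rw [Function.onFun, Set.disjoint_left]
      rintro x ⟨hxi, hxi'⟩ ⟨hxj, -⟩
      exact hxi' (hAnti (Nat.succ_le_of_lt h) hxj)
  -- decomposition of E k \ Eint into annuli
  set B : ℕ → ℕ → Set X := fun k j => if k ≤ j then A j else ∅ with hBdef
  have hBmeas : ∀ k j, MeasurableSet (B k j) := by
    intro k j
    simp only [hBdef]
    split <;> [exact hAmeas j; exact MeasurableSet.empty]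
  have hBsub : ∀ k j, B k j ⊆ A j := by
    intro k j
    simp only [hBdef]
    split <;> simp
  have hBdisj : ∀ k, Pairwise (Function.onFun Disjoint (B k)) := fun k i j hij =>
    Disjoint.mono (hBsub k i) (hBsub k j) (hdisj hij)
  have hset : ∀ k, E k \ Eint = ⋃ j, B k j := by
    intro k
    ext x
    simp only [hBdef, Set.mem_diff, hEintdef, Set.mem_iInter, not_forall, Set.mem_iUnion]
    constructor
    · rintro ⟨hxk, n, hxn⟩
      have hne : ∃ m, x ∉ E m := ⟨n, hxn⟩
      obtain ⟨j, hj⟩ : ∃ j, Nat.find hne = j + 1 := by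
        refine Nat.exists_eq_succ_of_ne_zero ?_
        intro h0
        exact (Nat.find_spec hne) ((h0 ▸ hAnti (Nat.zero_le k)) hxk)
      have hm : x ∉ E (j + 1) := hj ▸ Nat.find_spec hne
      have hxj : x ∈ E j := not_not.mp (Nat.find_min hne (by omega))
      have hkj : k ≤ j := by
        by_contra h
        exact hm (hAnti (by omega) hxk)
      exact ⟨j, by simp [hkj]; exact ⟨hxj, hm⟩⟩
    · rintro ⟨j, hx⟩
      rcases le_or_gt k j with hkj | hkj
      · rw [if_pos hkj] at hx
        exact ⟨hAnti hkj hx.1, j + 1, hx.2⟩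
      · rw [if_neg (by omega)] at hx
        exact absurd hx (Set.notMem_empty x)
  -- integral of ω over Eint is zero
  have hint0 : ∫⁻ x in Eint, ω x ∂ν = 0 := by
    have : ∫⁻ x in Eint, ω x ∂ν = ∫⁻ _ in Eint, (0 : ℝ≥0∞) ∂ν :=
      setLIntegral_congr_fun hEintmeas hω0
    simpa using this
  -- the integral over E k is bounded by the sum over annuli
  have hint : ∀ k, ∫⁻ x in E k, ω x ∂ν ≤ ∑' j, ∫⁻ x in B k j, ω x ∂ν := by
    intro k
    have hEk : E k = (E k ∩ Eint) ∪ (E k \ Eint) := (Set.inter_union_diff _ _).symm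
    calc ∫⁻ x in E k, ω x ∂ν = ∫⁻ x in (E k ∩ Eint) ∪ (E k \ Eint), ω x ∂ν := by rw [← hEk]
      _ ≤ ∫⁻ x in E k ∩ Eint, ω x ∂ν + ∫⁻ x in E k \ Eint, ω x ∂ν := lintegral_union_le _ _ _
      _ ≤ ∫⁻ x in Eint, ω x ∂ν + ∫⁻ x in E k \ Eint, ω x ∂ν := by
          gcongr
          exact Set.inter_subset_right
      _ = ∫⁻ x in ⋃ j, B k j, ω x ∂ν := by rw [hint0, zero_add, hset k]
      _ = ∑' j, ∫⁻ x in B k j, ω x ∂ν := lintegral_iUnion (hBmeas k) (hBdisj k) _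
  -- main computation
  calc ∑' k, c k * ∫⁻ x in E k, ω x ∂ν
      ≤ ∑' k, c k * ∑' j, ∫⁻ x in B k j, ω x ∂ν := by
        exact ENNReal.tsum_le_tsum fun k => mul_le_mul_right (hint k) _
    _ = ∑' k, ∑' j, c k * ∫⁻ x in B k j, ω x ∂ν := by
        exact tsum_congr fun k => ENNReal.tsum_mul_left.symm
    _ = ∑' j, ∑' k, c k * ∫⁻ x in B k j, ω x ∂ν := ENNReal.tsum_comm
    _ = ∑' j, (∑ k ∈ Finset.range (j + 1), c k) * ∫⁻ x in A j, ω x ∂ν := by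
        refine tsum_congr fun j => ?_
        have : ∀ k, c k * ∫⁻ x in B k j, ω x ∂ν
            = if k ∈ Finset.range (j + 1) then c k * ∫⁻ x in A j, ω x ∂ν else 0 := by
          intro k
          simp only [hBdef, Finset.mem_range]
          rcases le_or_gt k j with hkj | hkj
          · rw [if_pos hkj, if_pos (by omega)]
          · rw [if_neg (by omega), if_neg (by omega)]
            simp
        rw [tsum_congr this, tsum_eq_sum (fun k hk => by rw [if_neg hk]), Finset.sum_mul]
        exact Finset.sum_congr rfl fun k hk => by rw [if_pos hk]
    _ ≤ ∑' j, C * ν (A j) := by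
        refine ENNReal.tsum_le_tsum fun j => ?_
        have hIle : ∫⁻ x in A j, ω x ∂ν ≤ (⨆ x ∈ E j, ω x) * ν (A j) := by
          calc ∫⁻ x in A j, ω x ∂ν ≤ ∫⁻ _ in A j, (⨆ x ∈ E j, ω x) ∂ν := by
                refine setLIntegral_mono' (hAmeas j) fun x hx => ?_
                exact le_biSup ω hx.1
            _ = (⨆ x ∈ E j, ω x) * ν (A j) := by
                rw [setLIntegral_const]
        calc (∑ k ∈ Finset.range (j + 1), c k) * ∫⁻ x in A j, ω x ∂ν
            ≤ (∑ k ∈ Finset.range (j + 1), c k) * ((⨆ x ∈ E j, ω x) * ν (A j)) :=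
              mul_le_mul_right hIle _
          _ = ((∑ k ∈ Finset.range (j + 1), c k) * (⨆ x ∈ E j, ω x)) * ν (A j) := by ring
          _ ≤ C * ν (A j) := mul_le_mul_left (hbound j) _
    _ = C * ∑' j, ν (A j) := ENNReal.tsum_mul_left
    _ = C * ν (⋃ j, A j) := by rw [measure_iUnion hdisj hAmeas]
    _ ≤ C * ν (E 0 \ Eint) := by
        gcongr
        rintro x hx
        simp only [Set.mem_iUnion] at hx
        obtain ⟨j, hxj, hxj'⟩ := hx
        refine ⟨hAnti (Nat.zero_le j) hxj, fun hx' => hxj' ?_⟩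
        exact Set.mem_iInter.mp hx' (j + 1)
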